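/- A graph G admits a d-simultaneous interval representation if and only if G is the intersection of an interval graph and a graph with edge clique cover number at most d. -/
import Mathlib


/-- `(a, b, L)` is a `d`-simultaneous interval representation of `G`:
each vertex `v` gets a nonempty open interval `(a v, b v)` and a label set
`L v ⊆ {1,…,d}`, and distinct vertices are adjacent iff both their intervals
and their label sets intersect. -/
def IsSIRep {V : Type*} (G : SimpleGraph V) (d : ℕ)
    (a b : V → ℝ) (L : V → Finset (Fin d)) : Prop :=
  (∀ v, a v < b v) ∧
  ∀ u v : V, u ≠ v →
    (G.Adj u v ↔ (Set.Ioo (a u) (b u) ∩ Set.Ioo (a v) (b v)).Nonempty ∧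
      (L u ∩ L v).Nonempty)

/-- The simultaneous interval number of `G`. -/
noncomputable def si {V : Type*} (G : SimpleGraph V) : ℕ :=
  sInf {d | ∃ a b L, IsSIRep G d a b L}

/-- `F` is an interval graph. -/
def IsIntervalGraph {V : Type*} (F : SimpleGraph V) : Prop :=
  ∃ a b : V → ℝ, (∀ v, a v < b v) ∧
    ∀ u v : V, u ≠ v →
      (F.Adj u v ↔ (Set.Ioo (a u) (b u) ∩ Set.Ioo (a v) (b v)).Nonempty)

/-- The edge clique cover number of `H`: the least number of cliques of `H`
covering all edges of `H`. -/
noncomputable def eccNumber {V : Type*} (H : SimpleGraph V) : ℕ :=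
  sInf {d | ∃ C : Fin d → Finset V, (∀ i, H.IsClique (C i : Set V)) ∧
    ∀ u v, H.Adj u v → ∃ i, u ∈ C i ∧ v ∈ C i}

/-- `G` has a `d`-simultaneous interval representation iff `G` is the
intersection of an interval graph and a graph with edge clique cover number at
most `d`. -/
theorem siRep_iff_intersection_intervalGraph_ecc {V : Type*} [Fintype V]
    (G : SimpleGraph V) (d : ℕ) :
    (∃ a b L, IsSIRep G d a b L) ↔
      ∃ F H : SimpleGraph V, IsIntervalGraph F ∧ eccNumber H ≤ d ∧ G = F ⊓ H := by
  classical
  constructor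
  · rintro ⟨a, b, L, hab, hadj⟩
    refine ⟨SimpleGraph.fromRel
        (fun u v => (Set.Ioo (a u) (b u) ∩ Set.Ioo (a v) (b v)).Nonempty),
      SimpleGraph.fromRel (fun u v => (L u ∩ L v).Nonempty), ?_, ?_, ?_⟩
    · refine ⟨a, b, hab, fun u v huv => ?_⟩
      simp only [SimpleGraph.fromRel_adj, huv, ne_eq, not_false_eq_true, true_and]
      constructor
      · rintro (h | h)
        · exact h
        · rwa [Set.inter_comm] at h
      · exact Or.inl
    · apply Nat.sInf_le
      refine ⟨fun i => Finset.univ.filter (fun v => i ∈ L v), ?_, ?_⟩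
      · intro i u hu v hv huv
        simp only [Finset.coe_filter, Set.mem_setOf_eq] at hu hv
        exact ⟨huv, Or.inl ⟨i, Finset.mem_inter.2 ⟨hu.2, hv.2⟩⟩⟩
      · rintro u v ⟨huv, h⟩
        have h' : (L u ∩ L v).Nonempty := by
          rcases h with h | h
          · exact h
          · rwa [Finset.inter_comm]
        obtain ⟨i, hi⟩ := h'
        rw [Finset.mem_inter] at hi
        exact ⟨i, by simp [hi.1], by simp [hi.2]⟩
    · ext u v
      by_cases huv : u = v
      · subst huv; simp
      · simp only [SimpleGraph.inf_adj, SimpleGraph.fromRel_adj, huv, ne_eq,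
          not_false_eq_true, true_and, hadj u v huv]
        constructor
        · rintro ⟨h1, h2⟩
          exact ⟨Or.inl h1, Or.inl h2⟩
        · rintro ⟨h1, h2⟩
          constructor
          · rcases h1 with h | h
            · exact h
            · rwa [Set.inter_comm] at h
          · rcases h2 with h | h
            · exact h
            · rwa [Finset.inter_comm] at h
  · rintro ⟨F, H, ⟨a, b, hab, hF⟩, hecc, rfl⟩
    have hne : {n | ∃ C : Fin n → Finset V, (∀ i, H.IsClique (C i : Set V)) ∧
        ∀ u v, H.Adj u v → ∃ i, u ∈ C i ∧ v ∈ C i}.Nonempty := by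
      refine ⟨Fintype.card (V × V), ?_⟩
      let e : V × V ≃ Fin (Fintype.card (V × V)) := Fintype.equivFin _
      refine ⟨fun i => if H.Adj (e.symm i).1 (e.symm i).2
          then {(e.symm i).1, (e.symm i).2} else ∅, ?_, ?_⟩
      · intro i
        dsimp only
        split_ifs with h
        · intro x hx y hy hxy
          simp only [Finset.coe_insert, Set.mem_insert_iff, Finset.coe_singleton,
            Set.mem_singleton_iff] at hx hy
          rcases hx with rfl | rfl <;> rcases hy with rfl | rfl
          · exact absurd rfl hxy
          · exact h
          · exact h.symm
          · exact absurd rfl hxy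
        · simp
      · intro u v huv
        refine ⟨e (u, v), ?_⟩
        simp [huv]
    have hmem : ∃ C : Fin (eccNumber H) → Finset V,
        (∀ i, H.IsClique (C i : Set V)) ∧
        ∀ u v, H.Adj u v → ∃ i, u ∈ C i ∧ v ∈ C i := Nat.sInf_mem hne
    obtain ⟨C, hC1, hC2⟩ := hmem
    set C' : Fin d → Finset V :=
      fun i => if h : (i : ℕ) < eccNumber H then C ⟨i, h⟩ else ∅ with hC'
    refine ⟨a, b, fun v => Finset.univ.filter (fun i => v ∈ C' i), hab, ?_⟩
    intro u v huv
    rw [SimpleGraph.inf_adj, hF u v huv]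
    constructor
    · rintro ⟨h1, h2⟩
      obtain ⟨i, hi1, hi2⟩ := hC2 u v h2
      have hid : (i : ℕ) < d := lt_of_lt_of_le i.2 hecc
      refine ⟨h1, ⟨⟨(i : ℕ), hid⟩, ?_⟩⟩
      have : C' ⟨(i : ℕ), hid⟩ = C i := by
        simp only [hC']
        rw [dif_pos (show ((⟨(i : ℕ), hid⟩ : Fin d) : ℕ) < eccNumber H from i.2)]
      rw [Finset.mem_inter, Finset.mem_filter, Finset.mem_filter, this]
      exact ⟨⟨Finset.mem_univ _, hi1⟩, Finset.mem_univ _, hi2⟩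
    · rintro ⟨h1, ⟨i, hi⟩⟩
      rw [Finset.mem_inter, Finset.mem_filter, Finset.mem_filter] at hi
      refine ⟨h1, ?_⟩
      by_cases h : (i : ℕ) < eccNumber H
      · have : C' i = C ⟨i, h⟩ := by simp only [hC', dif_pos h]
        rw [this] at hi
        exact hC1 _ hi.1.2 hi.2.2 huv
      · have : C' i = ∅ := by simp only [hC', dif_neg h]
        rw [this] at hi
        exact absurd hi.1.2 (Finset.notMem_empty u)
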